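/- arXiv:2209.12315 — 2 statements merged into one kernel-verified Lean document; each statement's English description precedes it below -/
import Mathlib

section
/- Let G be a finite simple graph and let k be an odd positive integer. Then tree-α(G^k) ≤ tree-α(G). -/
open SimpleGraph

variable {V : Type*}

/-- The `k`-th power of a graph: distinct vertices are adjacent iff their distance is at most `k`. -/
def SimpleGraph.power (G : SimpleGraph V) (k : ℕ) : SimpleGraph V where
  Adj u v := u ≠ v ∧ G.Reachable u v ∧ G.dist u v ≤ k
  symm := by
    constructor
    rintro u v ⟨h1, h2, h3⟩
    exact ⟨h1.symm, h2.symm, by rwa [SimpleGraph.dist_comm]⟩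
  loopless := ⟨fun u h => h.1 rfl⟩

/-- A set of vertices is independent if it is pairwise non-adjacent. -/
def SimpleGraph.IsIndepSetOn (G : SimpleGraph V) (s : Set V) : Prop :=
  s.Pairwise fun u v => ¬ G.Adj u v

/-- The independence number of the subgraph of `G` induced by `X`. -/
noncomputable def indepNumOn (G : SimpleGraph V) (X : Set V) : ℕ :=
  sSup {n | ∃ S : Finset V, ↑S ⊆ X ∧ G.IsIndepSetOn ↑S ∧ S.card = n}

/-- `(T, X)` is a tree decomposition of `G`. -/
structure IsTreeDecompOn {ι : Type*} (G : SimpleGraph V) (T : SimpleGraph ι) (X : ι → Set V) :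
    Prop where
  isTree : T.IsTree
  exists_bag : ∀ v : V, ∃ t, v ∈ X t
  exists_bag_edge : ∀ ⦃u v : V⦄, G.Adj u v → ∃ t, u ∈ X t ∧ v ∈ X t
  subtree_connected : ∀ v : V, (T.induce {t | v ∈ X t}).Connected

/-- The independence number of a tree decomposition with bags `X`. -/
noncomputable def decompIndepNum {ι : Type*} (G : SimpleGraph V) (X : ι → Set V) : ℕ :=
  ⨆ t, indepNumOn G (X t)

/-- The tree-independence number: the minimum independence number over all tree decompositions. -/
noncomputable def treeIndepNum (G : SimpleGraph V) : ℕ :=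
  sInf {n | ∃ (ι : Type) (T : SimpleGraph ι) (X : ι → Set V),
    Finite ι ∧ IsTreeDecompOn G T X ∧ decompIndepNum G X = n}

/-- The graph `G(ℋ)` on the index set of a family of (vertex sets of) subgraphs of `G`:
two distinct indices are adjacent iff the subgraphs share a vertex or are joined by an edge. -/
def packingGraph {J : Type*} (G : SimpleGraph V) (S : J → Set V) : SimpleGraph J where
  Adj i j := i ≠ j ∧ ((S i ∩ S j).Nonempty ∨ ∃ u ∈ S i, ∃ v ∈ S j, G.Adj u v)
  symm := by
    constructor
    rintro i j ⟨hne, h⟩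
    refine ⟨hne.symm, ?_⟩
    rcases h with ⟨x, hx⟩ | ⟨u, hu, v, hv, huv⟩
    · exact Or.inl ⟨x, hx.2, hx.1⟩
    · exact Or.inr ⟨v, hv, u, hu, huv.symm⟩
  loopless := ⟨fun i h => h.1 rfl⟩

/-- A graph is chordal if it has no induced cycle of length at least four. -/
def IsChordal (G : SimpleGraph V) : Prop :=
  ∀ n : ℕ, 4 ≤ n → ∀ s : Set V, IsEmpty (G.induce s ≃g cycleGraph n)


section AuxPowerTree

open SimpleGraph

lemma aux_walk_prefix {V : Type*} {G : SimpleGraph V} {u v : V} (p : G.Walk u v) (i : ℕ) :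
    ∃ q : G.Walk u (p.getVert i), q.length ≤ i := by
  induction p generalizing i with
  | nil => exact ⟨(Walk.nil).copy rfl (Walk.getVert_of_length_le _ (Nat.zero_le i)).symm,
      by simp⟩
  | cons h p ih =>
    cases i with
    | zero => exact ⟨(Walk.nil).copy rfl (Walk.getVert_zero _).symm, by simp⟩
    | succ n =>
      obtain ⟨q, hq⟩ := ih n
      exact ⟨(q.cons h).copy rfl (Walk.getVert_cons_succ _ _).symm,
        by simpa using Nat.succ_le_succ hq⟩

lemma aux_walk_suffix {V : Type*} {G : SimpleGraph V} {u v : V} (p : G.Walk u v) (i : ℕ) :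
    ∃ q : G.Walk (p.getVert i) v, q.length ≤ p.length - i := by
  induction p generalizing i with
  | nil => exact ⟨(Walk.nil).copy (Walk.getVert_of_length_le _ (Nat.zero_le i)).symm rfl,
      by simp⟩
  | cons h p ih =>
    cases i with
    | zero => exact ⟨(p.cons h).copy (Walk.getVert_zero _).symm rfl, by simp⟩
    | succ n =>
      obtain ⟨q, hq⟩ := ih n
      refine ⟨q.copy (Walk.getVert_cons_succ _ _).symm rfl, ?_⟩
      rw [Walk.length_copy, Walk.length_cons]
      omega

lemma aux_reach_mono {ι : Type*} (T : SimpleGraph ι) {S₁ S₂ : Set ι} (h : S₁ ⊆ S₂)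
    (a b : S₁) (hr : (T.induce S₁).Reachable a b) :
    (T.induce S₂).Reachable ⟨a, h a.2⟩ ⟨b, h b.2⟩ :=
  hr.map ⟨Set.inclusion h, fun {x y} hxy => by simpa using hxy⟩

lemma aux_ball_connected {V : Type*} {ι : Type*} {G : SimpleGraph V} {T : SimpleGraph ι}
    {X : ι → Set V} (hTD : IsTreeDecompOn G T X) (r : ℕ) (v : V) :
    (T.induce {t | ∃ u ∈ X t, G.Reachable v u ∧ G.dist v u ≤ r}).Connected := by
  set S : Set ι := {t | ∃ u ∈ X t, G.Reachable v u ∧ G.dist v u ≤ r} with hSdef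
  obtain ⟨t₀, ht₀⟩ := hTD.exists_bag v
  have ht₀S : t₀ ∈ S := ⟨v, ht₀, Reachable.refl v, by simp [SimpleGraph.dist_self]⟩
  have hsub : ∀ u, G.Reachable v u → G.dist v u ≤ r → {s | u ∈ X s} ⊆ S :=
    fun u hru hdu s hs => ⟨u, hs, hru, hdu⟩
  have main : ∀ d u (hru : G.Reachable v u) (hdu : G.dist v u ≤ r), G.dist v u ≤ d →
      ∀ t (ht : u ∈ X t),
        (T.induce S).Reachable ⟨t, hsub u hru hdu ht⟩ ⟨t₀, ht₀S⟩ := by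
    intro d
    induction d with
    | zero =>
      intro u hru hdu h0 t ht
      have huv : v = u := (hru.dist_eq_zero_iff).mp (Nat.le_zero.mp h0)
      subst huv
      have hconn := hTD.subtree_connected v
      have hreach := hconn.preconnected ⟨t, ht⟩ ⟨t₀, ht₀⟩
      exact aux_reach_mono T (hsub v hru hdu) _ _ hreach
    | succ d ih =>
      intro u hru hdu h1 t ht
      rcases le_or_gt (G.dist v u) d with h | h
      · exact ih u hru hdu h t ht
      · have hd : G.dist v u = d + 1 := le_antisymm h1 h
        obtain ⟨p, hp⟩ := hru.exists_walk_length_eq_dist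
        have hlen : 0 < p.reverse.length := by
          rw [Walk.length_reverse, hp, hd]; omega
        have hadj : G.Adj u (p.reverse.getVert 1) := by
          have := p.reverse.adj_getVert_succ hlen
          rwa [Walk.getVert_zero] at this
        obtain ⟨q, hq⟩ := aux_walk_suffix p.reverse 1
        have hqd : q.length ≤ d := by
          rw [Walk.length_reverse, hp, hd] at hq; omega
        have hrw : G.Reachable v (p.reverse.getVert 1) := ⟨q.reverse⟩
        have hdw : G.dist v (p.reverse.getVert 1) ≤ d :=
          le_trans (G.dist_le q.reverse) (by rw [Walk.length_reverse]; exact hqd)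
        obtain ⟨t₁, ht₁u, ht₁w⟩ := hTD.exists_bag_edge hadj
        have r1 := ih (p.reverse.getVert 1) hrw (le_trans hdw (by omega)) hdw t₁ ht₁w
        have hconn := hTD.subtree_connected u
        have hreach := hconn.preconnected ⟨t, ht⟩ ⟨t₁, ht₁u⟩
        have r2 := aux_reach_mono T (hsub u hru hdu) _ _ hreach
        exact r2.trans r1
  rw [connected_iff]
  refine ⟨?_, ⟨⟨t₀, ht₀S⟩⟩⟩
  intro a b
  obtain ⟨t, ht⟩ := a
  obtain ⟨t', ht'⟩ := b
  have ht2 := ht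
  have ht2' := ht'
  obtain ⟨u, hu, hru, hdu⟩ := ht2
  obtain ⟨u', hu', hru', hdu'⟩ := ht2'
  exact (main (G.dist v u) u hru hdu le_rfl t hu).trans
    (main (G.dist v u') u' hru' hdu' le_rfl t' hu').symm

lemma aux_key {V : Type*} [Fintype V] (G : SimpleGraph V) (r : ℕ)
    {ι : Type} [hfι : Finite ι] {T : SimpleGraph ι} {X : ι → Set V}
    (hTD : IsTreeDecompOn G T X) :
    treeIndepNum (G.power (2 * r + 1)) ≤ decompIndepNum G X := by
  classical
  set X' : ι → Set V := fun t => {v | ∃ u ∈ X t, G.Reachable v u ∧ G.dist v u ≤ r} with hX'def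
  have hTD' : IsTreeDecompOn (G.power (2 * r + 1)) T X' := by
    refine ⟨hTD.isTree, ?_, ?_, ?_⟩
    · intro v
      obtain ⟨t, ht⟩ := hTD.exists_bag v
      exact ⟨t, v, ht, Reachable.refl v, by simp [SimpleGraph.dist_self]⟩
    · rintro u v ⟨hne, hreach, hdk⟩
      obtain ⟨p, hp⟩ := hreach.exists_walk_length_eq_dist
      by_cases hd : G.dist u v ≤ r
      · obtain ⟨t, ht⟩ := hTD.exists_bag u
        exact ⟨t, ⟨u, ht, Reachable.refl u, by simp [SimpleGraph.dist_self]⟩,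
          ⟨u, ht, hreach.symm, by rw [G.dist_comm]; exact hd⟩⟩
      · push_neg at hd
        have hrlen : r < p.length := by rw [hp]; exact hd
        have hadj := p.adj_getVert_succ hrlen
        obtain ⟨t, htm, htm'⟩ := hTD.exists_bag_edge hadj
        obtain ⟨q1, hq1⟩ := aux_walk_prefix p r
        obtain ⟨q2, hq2⟩ := aux_walk_suffix p (r + 1)
        have hplen : p.length ≤ 2 * r + 1 := hp.le.trans hdk
        refine ⟨t, ⟨p.getVert r, htm, ⟨q1⟩, le_trans (G.dist_le q1) hq1⟩,
          ⟨p.getVert (r + 1), htm', ⟨q2.reverse⟩, ?_⟩⟩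
        rw [G.dist_comm]
        exact le_trans (G.dist_le q2) (by omega)
    · intro v
      exact aux_ball_connected hTD r v
  have hind : ∀ t, indepNumOn (G.power (2 * r + 1)) (X' t) ≤ indepNumOn G (X t) := by
    intro t
    have hbdd : BddAbove {n | ∃ S : Finset V, ↑S ⊆ X t ∧ G.IsIndepSetOn ↑S ∧ S.card = n} := by
      refine ⟨Fintype.card V, ?_⟩
      rintro n ⟨S, -, -, rfl⟩
      exact S.card_le_univ
    have hne : {n | ∃ S : Finset V, ↑S ⊆ X' t ∧ (G.power (2 * r + 1)).IsIndepSetOn ↑S ∧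
        S.card = n}.Nonempty :=
      ⟨0, ∅, by simp, by simp [SimpleGraph.IsIndepSetOn], by simp⟩
    refine csSup_le_csSup hbdd hne ?_
    rintro n ⟨S, hSX, hSind, rfl⟩
    set f : V → V := fun v =>
      if h : ∃ u, u ∈ X t ∧ G.Reachable v u ∧ G.dist v u ≤ r then h.choose else v with hfdef
    have hf : ∀ v ∈ S, f v ∈ X t ∧ G.Reachable v (f v) ∧ G.dist v (f v) ≤ r := by
      intro v hv
      have h : ∃ u, u ∈ X t ∧ G.Reachable v u ∧ G.dist v u ≤ r := hSX hv
      have : f v = h.choose := dif_pos h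
      rw [this]
      exact h.choose_spec
    have hvw : ∀ v ∈ S, ∀ w ∈ S, v ≠ w →
        ¬ (G.Reachable v w ∧ G.dist v w ≤ 2 * r + 1) := by
      intro v hv w hw hne' hcon
      exact hSind (Finset.mem_coe.mpr hv) (Finset.mem_coe.mpr hw) hne'
        ⟨hne', hcon.1, hcon.2⟩
    have hinj : Set.InjOn f ↑S := by
      intro v hv w hw hfeq
      by_contra hne'
      obtain ⟨hfx, hfr, hfd⟩ := hf v hv
      obtain ⟨hfx', hfr', hfd'⟩ := hf w hw
      refine hvw v hv w hw hne' ⟨hfr.trans (by rw [hfeq]; exact hfr'.symm), ?_⟩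
      rw [← hfeq] at hfd' hfr'
      obtain ⟨p1, hp1⟩ := hfr.exists_walk_length_eq_dist
      obtain ⟨p2, hp2⟩ := hfr'.symm.exists_walk_length_eq_dist
      have := G.dist_le (p1.append p2)
      rw [Walk.length_append] at this
      rw [G.dist_comm] at hfd'
      omega
    refine ⟨S.image f, ?_, ?_, ?_⟩
    · intro x hx
      rw [Finset.coe_image] at hx
      obtain ⟨v, hv, rfl⟩ := hx
      exact (hf v (Finset.mem_coe.mp hv)).1
    · intro a ha b hb hab hadj
      rw [Finset.coe_image] at ha hb
      obtain ⟨v, hv, rfl⟩ := ha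
      obtain ⟨w, hw, rfl⟩ := hb
      have hvne : v ≠ w := fun h => hab (by rw [h])
      obtain ⟨hfx, hfr, hfd⟩ := hf v (Finset.mem_coe.mp hv)
      obtain ⟨hfx', hfr', hfd'⟩ := hf w (Finset.mem_coe.mp hw)
      refine hvw v (Finset.mem_coe.mp hv) w (Finset.mem_coe.mp hw) hvne
        ⟨hfr.trans (hadj.reachable.trans hfr'.symm), ?_⟩
      obtain ⟨p1, hp1⟩ := hfr.exists_walk_length_eq_dist
      obtain ⟨p2, hp2⟩ := hfr'.symm.exists_walk_length_eq_dist
      have := G.dist_le (p1.append (p2.cons hadj))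
      rw [Walk.length_append, Walk.length_cons] at this
      rw [G.dist_comm] at hfd'
      omega
    · rw [Finset.card_image_of_injOn hinj]
  have hdec : decompIndepNum (G.power (2 * r + 1)) X' ≤ decompIndepNum G X :=
    ciSup_mono (Set.Finite.bddAbove (Set.finite_range _)) hind
  exact le_trans (Nat.sInf_le ⟨ι, T, X', hfι, hTD', rfl⟩) hdec

end AuxPowerTree


theorem stmt_3 {V : Type*} [Fintype V] (G : SimpleGraph V) (k : ℕ)
    (hk : 0 < k) (hodd : Odd k) :
    treeIndepNum (G.power k) ≤ treeIndepNum G := by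
  obtain ⟨r, hr⟩ := hodd
  have hBne : Set.Nonempty {n | ∃ (ι : Type) (T : SimpleGraph ι) (X : ι → Set V),
      Finite ι ∧ IsTreeDecompOn G T X ∧ decompIndepNum G X = n} := by
    refine ⟨decompIndepNum G (fun _ : Unit => Set.univ), Unit, ⊥, fun _ => Set.univ,
      inferInstance, ?_, rfl⟩
    refine ⟨⟨?_, isAcyclic_bot⟩, fun v => ⟨(), Set.mem_univ v⟩,
      fun u v _ => ⟨(), Set.mem_univ u, Set.mem_univ v⟩, ?_⟩
    · rw [connected_iff]
      exact ⟨fun a b => Subsingleton.elim a b ▸ Reachable.refl a, ⟨()⟩⟩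
    · intro v
      rw [connected_iff]
      exact ⟨fun a b => Subsingleton.elim a b ▸ Reachable.refl a, ⟨⟨(), Set.mem_univ v⟩⟩⟩
  obtain ⟨ι, T, X, hfin, hTD, hval⟩ := Nat.sInf_mem hBne
  haveI := hfin
  have := aux_key G r hTD
  rw [hval] at this
  have hk2 : k = 2 * r + 1 := by omega
  rw [hk2]
  exact this
end

section
/- Let C be a finite cycle graph and let ℱ be a finite family of connected non-null subgraphs of C. Let G be the intersection graph of ℱ, i.e., the graph whose vertices are the members of ℱ, with two distinct members adjacent if and only if they share a vertex of C. Then tree-α(G) ≤ 2. -/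
open SimpleGraph

variable {V : Type*}

/-- The intersection graph of a family of (vertex sets of) subgraphs. -/
def intersectionGraph {V J : Type*} (S : J → Set V) : SimpleGraph J where
  Adj i j := i ≠ j ∧ (S i ∩ S j).Nonempty
  symm := by
    constructor
    rintro i j ⟨h1, x, hx1, hx2⟩
    exact ⟨h1.symm, x, hx2, hx1⟩
  loopless := ⟨fun i h => h.1 rfl⟩

lemma my_walk_inv {W : Type*} {G : SimpleGraph W} {p : W → Prop}
    (hG : ∀ a b, G.Adj a b → (p a ↔ p b)) {a b : W} (h : G.Reachable a b) : p a ↔ p b := by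
  obtain ⟨w⟩ := h
  induction w with
  | nil => exact Iff.rfl
  | cons h w ih => exact (hG _ _ h).trans ih

lemma my_pathGraph_inv {n : ℕ} {u v : Fin n} (huv : (u : ℕ) + 1 = (v : ℕ)) :
    ∀ a b : Fin n, (pathGraph n \ fromEdgeSet {s(u, v)}).Adj a b →
      (((a : ℕ) ≤ (u : ℕ)) ↔ ((b : ℕ) ≤ (u : ℕ))) := by
  intro a b hab
  rw [sdiff_adj, fromEdgeSet_adj] at hab
  obtain ⟨hp, he⟩ := hab
  rw [pathGraph_adj] at hp
  have hne : a ≠ b := by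
    intro h; subst h; omega
  have he' : s(a, b) ≠ s(u, v) := fun h => he ⟨h, hne⟩
  have h1' : ¬((a : ℕ) = (u : ℕ) ∧ (b : ℕ) = (v : ℕ)) := by
    rintro ⟨x1, x2⟩
    have : a = u := Fin.ext x1
    have : b = v := Fin.ext x2
    subst_vars
    exact he' rfl
  have h2' : ¬((a : ℕ) = (v : ℕ) ∧ (b : ℕ) = (u : ℕ)) := by
    rintro ⟨x1, x2⟩
    have : a = v := Fin.ext x1
    have : b = u := Fin.ext x2
    subst_vars
    exact he' (Sym2.eq_swap)
  omega

lemma my_pathGraph_isAcyclic (n : ℕ) : (pathGraph n).IsAcyclic := by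
  rw [isAcyclic_iff_forall_adj_isBridge]
  intro u v hadj
  rw [isBridge_iff]
  rw [pathGraph_adj] at hadj
  rcases hadj with h | h
  · intro hr
    have := my_walk_inv (p := fun x : Fin n => (x : ℕ) ≤ (u : ℕ))
      (my_pathGraph_inv h) hr
    simp only [le_refl, true_iff] at this
    omega
  · intro hr
    rw [Sym2.eq_swap] at hr
    have := my_walk_inv (p := fun x : Fin n => (x : ℕ) ≤ (v : ℕ))
      (my_pathGraph_inv h) hr.symm
    simp only [le_refl, true_iff] at this
    omega

lemma my_fin_step {m : ℕ} {a b : Fin (m + 3)} (ha : a ≠ 0) (h : a - b = 1) :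
    (b : ℕ) + 1 = (a : ℕ) := by
  have h2 : a = b + 1 := by
    rw [sub_eq_iff_eq_add] at h
    exact h.trans (add_comm 1 b)
  have hb : b ≠ Fin.last (m + 2) := by
    intro hb
    subst hb
    rw [Fin.last_add_one] at h2
    exact ha h2
  have hblt : b < Fin.last (m + 2) := lt_of_le_of_ne (Fin.le_last b) hb
  rw [h2, Fin.val_add_one_of_lt hblt]

lemma my_cycle_adj_path {m : ℕ} {a b : Fin (m + 3)} (ha : a ≠ 0) (hb : b ≠ 0)
    (h : (cycleGraph (m + 3)).Adj a b) : (pathGraph (m + 3)).Adj a b := by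
  have h' := (cycleGraph_adj (n := m + 1)).mp h
  rw [pathGraph_adj]
  rcases h' with h' | h'
  · exact Or.inr (my_fin_step ha h')
  · exact Or.inl (my_fin_step hb h')

lemma my_subtree_conn {m : ℕ} (H : (cycleGraph (m + 3)).Subgraph) (hH : H.Connected)
    (h0 : (0 : Fin (m + 3)) ∉ H.verts) : ((pathGraph (m + 3)).induce H.verts).Connected := by
  refine SimpleGraph.Connected.map
    (⟨fun x => x, ?_⟩ : H.coe →g (pathGraph (m + 3)).induce H.verts)
    (fun x => ⟨x, rfl⟩) hH.coe
  rintro ⟨x, hx⟩ ⟨y, hy⟩ hxy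
  have hx0 : x ≠ 0 := fun h => h0 (h ▸ hx)
  have hy0 : y ≠ 0 := fun h => h0 (h ▸ hy)
  exact my_cycle_adj_path hx0 hy0 (H.adj_sub hxy)

theorem stmt_11 {J : Type*} [Finite J] (n : ℕ) (hn : 3 ≤ n)
    (F : J → (cycleGraph n).Subgraph) (hF : ∀ j, (F j).Connected) :
    treeIndepNum (intersectionGraph fun j => (F j).verts) ≤ 2 := by
  classical
  obtain ⟨m, rfl⟩ : ∃ m, n = m + 3 := ⟨n - 3, by omega⟩
  set G := intersectionGraph fun j => (F j).verts with hG
  let X : Fin (m + 3) → Set J :=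
    fun t => {j | t ∈ (F j).verts ∨ (0 : Fin (m + 3)) ∈ (F j).verts}
  have hdec : IsTreeDecompOn G (pathGraph (m + 3)) X := by
    constructor
    · exact ⟨pathGraph_connected (m + 2), my_pathGraph_isAcyclic _⟩
    · intro j
      obtain ⟨t, ht⟩ := (hF j).nonempty
      exact ⟨t, Or.inl ht⟩
    · rintro a b ⟨hne, x, hxa, hxb⟩
      exact ⟨x, Or.inl hxa, Or.inl hxb⟩
    · intro j
      by_cases h0 : (0 : Fin (m + 3)) ∈ (F j).verts
      · have huniv : {t | j ∈ X t} = Set.univ := Set.eq_univ_of_forall fun t => Or.inr h0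
        rw [huniv]
        exact SimpleGraph.Connected.map (induceUnivIso (pathGraph (m + 3))).symm.toHom
          (induceUnivIso (pathGraph (m + 3))).symm.toEquiv.surjective
          (pathGraph_connected (m + 2))
      · have hset : {t | j ∈ X t} = (F j).verts := by
          ext t
          simp only [X, Set.mem_setOf_eq, h0, or_false]
        rw [hset]
        exact my_subtree_conn (F j) (hF j) h0
  have hbag : ∀ t, indepNumOn G (X t) ≤ 2 := by
    intro t
    apply csSup_le
    · exact ⟨0, ∅, by simp, by simp [SimpleGraph.IsIndepSetOn], by simp⟩
    · rintro k ⟨S, hS, hind, rfl⟩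
      by_contra hk
      push_neg at hk
      have hcard : (Finset.univ : Finset Bool).card < S.card := by
        simpa using hk
      obtain ⟨a, ha, b, hb, hab, hfab⟩ :=
        Finset.exists_ne_map_eq_of_card_lt_of_maps_to hcard
          (f := fun j => decide (t ∈ (F j).verts)) (fun j _ => Finset.mem_univ _)
      have hadj : ¬ G.Adj a b := hind (Finset.mem_coe.mpr ha) (Finset.mem_coe.mpr hb) hab
      by_cases hta : t ∈ (F a).verts
      · have htb : t ∈ (F b).verts := by
          have : decide (t ∈ (F b).verts) = true := by
            rw [← hfab]; simpa using hta
          simpa using this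
        exact hadj ⟨hab, t, hta, htb⟩
      · have htb : t ∉ (F b).verts := by
          have : decide (t ∈ (F b).verts) = false := by
            rw [← hfab]; simpa using hta
          simpa using this
        have h0a : (0 : Fin (m + 3)) ∈ (F a).verts := ((hS ha).resolve_left hta)
        have h0b : (0 : Fin (m + 3)) ∈ (F b).verts := ((hS hb).resolve_left htb)
        exact hadj ⟨hab, 0, h0a, h0b⟩
  have hdin : decompIndepNum G X ≤ 2 := ciSup_le hbag
  calc treeIndepNum G ≤ decompIndepNum G X :=
        Nat.sInf_le ⟨Fin (m + 3), pathGraph (m + 3), X, inferInstance, hdec, rfl⟩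
    _ ≤ 2 := hdin
end
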